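/- Let (Ω, 𝒫) be a probability space and let Y, Z, G : Ω → {0,1} be measurable random variables such that G and Z are conditionally independent given Y, and assume 𝒫(Y=0), 𝒫(Y=1), 𝒫(Z=0), 𝒫(Z=1) > 0. Set TPR = 𝒫(G=1 | Y=1) and TNR = 𝒫(G=0 | Y=0). Then |𝒫(Y=G | Z=1) − 𝒫(Y=G | Z=0)| = |𝒫(Y=1 | Z=1) − 𝒫(Y=1 | Z=0)| · |TPR − TNR|. -/

import Mathlib

open MeasureTheory

/-- Conditional probability `𝒫(A | B)` as a real number. -/
noncomputable def condProb {Ω : Type*} [MeasurableSpace Ω] (μ : Measure Ω)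
    (A B : Set Ω) : ℝ :=
  (μ (A ∩ B)).toReal / (μ B).toReal

/-- **Accuracy-gap factorization.** If the prediction `G` and the subpopulation
indicator `Z` are conditionally independent given the label `Y`, then
`|𝒫(Y=G | Z=1) − 𝒫(Y=G | Z=0)| = |𝒫(Y=1 | Z=1) − 𝒫(Y=1 | Z=0)| · |TPR − TNR|`. -/
theorem accuracy_gap_factorization {Ω : Type*} [MeasurableSpace Ω] (μ : Measure Ω)
    [IsProbabilityMeasure μ] (Y Z G : Ω → Bool)
    (hY : Measurable Y) (hZ : Measurable Z) (hG : Measurable G)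
    (hCI : ∀ g z y : Bool,
      condProb μ ({ω | G ω = g} ∩ {ω | Z ω = z}) {ω | Y ω = y} =
        condProb μ {ω | G ω = g} {ω | Y ω = y} *
          condProb μ {ω | Z ω = z} {ω | Y ω = y})
    (hY1 : 0 < μ {ω | Y ω = true}) (hY0 : 0 < μ {ω | Y ω = false})
    (hZ1 : 0 < μ {ω | Z ω = true}) (hZ0 : 0 < μ {ω | Z ω = false}) :
    |condProb μ {ω | Y ω = G ω} {ω | Z ω = true} -
        condProb μ {ω | Y ω = G ω} {ω | Z ω = false}| =
      |condProb μ {ω | Y ω = true} {ω | Z ω = true} -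
          condProb μ {ω | Y ω = true} {ω | Z ω = false}| *
        |condProb μ {ω | G ω = true} {ω | Y ω = true} -
            condProb μ {ω | G ω = false} {ω | Y ω = false}| := by
  -- notation
  set T : Set Ω := {ω | Y ω = true} with hT
  set F : Set Ω := {ω | Y ω = false} with hF
  have hmT : MeasurableSet T := hY (measurableSet_singleton true)
  have hmF : MeasurableSet F := hY (measurableSet_singleton false)
  have hmZ : ∀ z : Bool, MeasurableSet {ω | Z ω = z} := fun z => hZ (measurableSet_singleton z)
  have hmG : ∀ g : Bool, MeasurableSet {ω | G ω = g} := fun g => hG (measurableSet_singleton g)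
  -- positivity of real measures
  have hpt : (0:ℝ) < (μ T).toReal := ENNReal.toReal_pos hY1.ne' (measure_ne_top μ T)
  have hpf : (0:ℝ) < (μ F).toReal := ENNReal.toReal_pos hY0.ne' (measure_ne_top μ F)
  have hq1 : (0:ℝ) < (μ {ω | Z ω = true}).toReal :=
    ENNReal.toReal_pos hZ1.ne' (measure_ne_top μ _)
  have hq0 : (0:ℝ) < (μ {ω | Z ω = false}).toReal :=
    ENNReal.toReal_pos hZ0.ne' (measure_ne_top μ _)
  set tpr : ℝ := condProb μ {ω | G ω = true} T with htpr
  set tnr : ℝ := condProb μ {ω | G ω = false} F with htnr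
  -- key: μ((G=g ∩ Z=z) ∩ Y=y) = condProb(G=g|Y=y) * μ(Z=z ∩ Y=y)
  have key : ∀ g z y : Bool,
      (μ (({ω | G ω = g} ∩ {ω | Z ω = z}) ∩ {ω | Y ω = y})).toReal =
        condProb μ {ω | G ω = g} {ω | Y ω = y} *
          (μ ({ω | Z ω = z} ∩ {ω | Y ω = y})).toReal := by
    intro g z y
    have h := hCI g z y
    have hpy : (0:ℝ) < (μ {ω | Y ω = y}).toReal := by
      cases y
      · exact hpf
      · exact hpt
    unfold condProb at h ⊢
    field_simp at h
    rw [div_mul_eq_mul_div, eq_div_iff hpy.ne']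
    apply mul_right_cancel₀ hpy.ne'
    linear_combination (μ {ω | Y ω = y}).toReal * h
  -- decomposition of {Y = G} ∩ {Z = z}
  have decomp : ∀ z : Bool,
      (μ ({ω | Y ω = G ω} ∩ {ω | Z ω = z})).toReal =
        tpr * (μ ({ω | Z ω = z} ∩ T)).toReal +
        tnr * (μ ({ω | Z ω = z} ∩ F)).toReal := by
    intro z
    have hset : {ω | Y ω = G ω} ∩ {ω | Z ω = z} =
        (({ω | G ω = true} ∩ {ω | Z ω = z}) ∩ T) ∪
        (({ω | G ω = false} ∩ {ω | Z ω = z}) ∩ F) := by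
      ext ω
      simp only [Set.mem_inter_iff, Set.mem_union, Set.mem_setOf_eq, hT, hF]
      cases hy : Y ω <;> cases hg : G ω <;> simp
    have hdisj : Disjoint (({ω | G ω = true} ∩ {ω | Z ω = z}) ∩ T)
        (({ω | G ω = false} ∩ {ω | Z ω = z}) ∩ F) := by
      apply Set.disjoint_left.mpr
      rintro ω ⟨_, h1⟩ ⟨_, h2⟩
      simp only [hT, hF, Set.mem_setOf_eq] at h1 h2
      rw [h1] at h2; exact Bool.noConfusion h2
    have hm2 : MeasurableSet (({ω | G ω = false} ∩ {ω | Z ω = z}) ∩ F) :=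
      (((hmG false).inter (hmZ z)).inter hmF)
    rw [hset, measure_union hdisj hm2,
      ENNReal.toReal_add (measure_ne_top μ _) (measure_ne_top μ _),
      key true z true, key false z false]
  -- measure of {Z=z} splits over Y
  have split : ∀ z : Bool,
      (μ {ω | Z ω = z}).toReal =
        (μ ({ω | Z ω = z} ∩ T)).toReal + (μ ({ω | Z ω = z} ∩ F)).toReal := by
    intro z
    have hset : {ω | Z ω = z} = ({ω | Z ω = z} ∩ T) ∪ ({ω | Z ω = z} ∩ F) := by
      ext ω
      simp only [Set.mem_inter_iff, Set.mem_union, Set.mem_setOf_eq, hT, hF]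
      cases hy : Y ω <;> simp
    have hdisj : Disjoint ({ω | Z ω = z} ∩ T) ({ω | Z ω = z} ∩ F) := by
      apply Set.disjoint_left.mpr
      rintro ω ⟨_, h1⟩ ⟨_, h2⟩
      simp only [hT, hF, Set.mem_setOf_eq] at h1 h2
      rw [h1] at h2; exact Bool.noConfusion h2
    conv_lhs => rw [hset]
    rw [measure_union hdisj ((hmZ z).inter hmF),
      ENNReal.toReal_add (measure_ne_top μ _) (measure_ne_top μ _)]
  -- set up real variables
  set a1 : ℝ := (μ ({ω | Z ω = true} ∩ T)).toReal with ha1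
  set b1 : ℝ := (μ ({ω | Z ω = true} ∩ F)).toReal with hb1
  set a0 : ℝ := (μ ({ω | Z ω = false} ∩ T)).toReal with ha0
  set b0 : ℝ := (μ ({ω | Z ω = false} ∩ F)).toReal with hb0
  set q1 : ℝ := (μ {ω | Z ω = true}).toReal with hq1e
  set q0 : ℝ := (μ {ω | Z ω = false}).toReal with hq0e
  have hs1 : q1 = a1 + b1 := split true
  have hs0 : q0 = a0 + b0 := split false
  have e1 : condProb μ {ω | Y ω = G ω} {ω | Z ω = true} = (tpr * a1 + tnr * b1) / q1 := by
    unfold condProb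
    rw [decomp true]
  have e0 : condProb μ {ω | Y ω = G ω} {ω | Z ω = false} = (tpr * a0 + tnr * b0) / q0 := by
    unfold condProb
    rw [decomp false]
  have f1 : condProb μ T {ω | Z ω = true} = a1 / q1 := by
    unfold condProb
    rw [Set.inter_comm]
  have f0 : condProb μ T {ω | Z ω = false} = a0 / q0 := by
    unfold condProb
    rw [Set.inter_comm]
  rw [e1, e0]
  show _ = |condProb μ T {ω | Z ω = true} - condProb μ T {ω | Z ω = false}| * _
  rw [f1, f0, ← abs_mul]
  congr 1
  rw [show b1 = q1 - a1 by linarith, show b0 = q0 - a0 by linarith]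
  field_simp
  ring
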